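/- In sl(3), the classical r-matrix r_{JE} = H^P ∧ E + A ∧ B + ξ H^⊥ ∧ A (with H^P, H^⊥, A, B, E as in the standard peripheric identification) satisfies the classical Yang–Baxter equation for every scalar ξ. -/

import Mathlib

set_option maxHeartbeats 1000000

/- STATEMENT 11: In sl(3), r_JE = H^P ∧ E + A ∧ B + ξ H^⊥ ∧ A satisfies the
classical Yang–Baxter equation in U(sl(3))^{⊗3} for every scalar ξ, where
H^P = (1/3)(2E₁₁−E₂₂−E₃₃), H^⊥ = (1/3)(E₁₁−2E₂₂+E₃₃), A = E₁₂, B = E₂₃, E = E₁₃. -/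

open TensorProduct Matrix

attribute [local instance 100] LieRing.ofAssociativeRing

noncomputable section

variable (K : Type) [Field K] [CharZero K] (L : Type) [LieRing L] [LieAlgebra K L]

/-- The triple tensor power of the universal enveloping algebra. -/
abbrev UEA3 := UniversalEnvelopingAlgebra K L ⊗[K]
    (UniversalEnvelopingAlgebra K L ⊗[K] UniversalEnvelopingAlgebra K L)

variable {L}

/-- `a ↦ ι a ⊗ 1 ⊗ 1`. -/
def emb1 (a : L) : UEA3 K L :=
  (UniversalEnvelopingAlgebra.ι K a) ⊗ₜ[K] ((1 : UniversalEnvelopingAlgebra K L) ⊗ₜ[K] 1)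

/-- `a ↦ 1 ⊗ ι a ⊗ 1`. -/
def emb2 (a : L) : UEA3 K L :=
  (1 : UniversalEnvelopingAlgebra K L) ⊗ₜ[K] ((UniversalEnvelopingAlgebra.ι K a) ⊗ₜ[K] 1)

/-- `a ↦ 1 ⊗ 1 ⊗ ι a`. -/
def emb3 (a : L) : UEA3 K L :=
  (1 : UniversalEnvelopingAlgebra K L) ⊗ₜ[K]
    ((1 : UniversalEnvelopingAlgebra K L) ⊗ₜ[K] (UniversalEnvelopingAlgebra.ι K a))

/-- `(a ∧ b)₁₂ = a ⊗ b ⊗ 1 − b ⊗ a ⊗ 1`. -/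
def w12 (a b : L) : UEA3 K L := emb1 K a * emb2 K b - emb1 K b * emb2 K a

/-- `(a ∧ b)₁₃ = a ⊗ 1 ⊗ b − b ⊗ 1 ⊗ a`. -/
def w13 (a b : L) : UEA3 K L := emb1 K a * emb3 K b - emb1 K b * emb3 K a

/-- `(a ∧ b)₂₃ = 1 ⊗ a ⊗ b − 1 ⊗ b ⊗ a`. -/
def w23 (a b : L) : UEA3 K L := emb2 K a * emb3 K b - emb2 K b * emb3 K a

def Esl3 (i j : Fin 3) : Matrix (Fin 3) (Fin 3) K := single i j 1

def HPsl3 : Matrix (Fin 3) (Fin 3) K :=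
  (3 : K)⁻¹ • ((2 : K) • Esl3 K 0 0 - Esl3 K 1 1 - Esl3 K 2 2)

def Hperpsl3 : Matrix (Fin 3) (Fin 3) K :=
  (3 : K)⁻¹ • (Esl3 K 0 0 - (2 : K) • Esl3 K 1 1 + Esl3 K 2 2)

/-- `(r_JE)ₚq` as a function of the wedge embedding. -/
def rJE (ξ : K)
    (w : Matrix (Fin 3) (Fin 3) K → Matrix (Fin 3) (Fin 3) K → UEA3 K (Matrix (Fin 3) (Fin 3) K)) :
    UEA3 K (Matrix (Fin 3) (Fin 3) K) :=
  w (HPsl3 K) (Esl3 K 0 2) + w (Esl3 K 0 1) (Esl3 K 1 2) + ξ • w (Hperpsl3 K) (Esl3 K 0 1)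

/-! ### Auxiliary lemmas -/

section Aux

-- swap lemmas for embeddings in different slots
lemma e21 (a b : L) : emb2 K a * emb1 K b = emb1 K b * emb2 K a := by
  simp [emb1, emb2, Algebra.TensorProduct.tmul_mul_tmul]

lemma e31 (a b : L) : emb3 K a * emb1 K b = emb1 K b * emb3 K a := by
  simp [emb1, emb3, Algebra.TensorProduct.tmul_mul_tmul]

lemma e32 (a b : L) : emb3 K a * emb2 K b = emb2 K b * emb3 K a := by
  simp [emb2, emb3, Algebra.TensorProduct.tmul_mul_tmul]

lemma e21' (a b : L) (x : UEA3 K L) :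
    emb2 K a * (emb1 K b * x) = emb1 K b * (emb2 K a * x) := by
  rw [← mul_assoc, e21, mul_assoc]

lemma e31' (a b : L) (x : UEA3 K L) :
    emb3 K a * (emb1 K b * x) = emb1 K b * (emb3 K a * x) := by
  rw [← mul_assoc, e31, mul_assoc]

lemma e32' (a b : L) (x : UEA3 K L) :
    emb3 K a * (emb2 K b * x) = emb2 K b * (emb3 K a * x) := by
  rw [← mul_assoc, e32, mul_assoc]

lemma usub_lie (x y z : UEA3 K L) : ⁅x - y, z⁆ = ⁅x, z⁆ - ⁅y, z⁆ := by
  simp only [Ring.lie_def, sub_mul, mul_sub]; abel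

lemma ulie_sub (x y z : UEA3 K L) : ⁅x, y - z⁆ = ⁅x, y⁆ - ⁅x, z⁆ := by
  simp only [Ring.lie_def, sub_mul, mul_sub]; abel

lemma uadd_lie (x y z : UEA3 K L) : ⁅x + y, z⁆ = ⁅x, z⁆ + ⁅y, z⁆ := by
  simp only [Ring.lie_def, add_mul, mul_add]; abel

lemma ulie_add (x y z : UEA3 K L) : ⁅x, y + z⁆ = ⁅x, y⁆ + ⁅x, z⁆ := by
  simp only [Ring.lie_def, add_mul, mul_add]; abel

lemma usmul_lie (c : K) (x y : UEA3 K L) : ⁅c • x, y⁆ = c • ⁅x, y⁆ := by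
  simp only [Ring.lie_def, smul_mul_assoc, mul_smul_comm, smul_sub]

lemma ulie_smul (c : K) (x y : UEA3 K L) : ⁅x, c • y⁆ = c • ⁅x, y⁆ := by
  simp only [Ring.lie_def, smul_mul_assoc, mul_smul_comm, smul_sub]

lemma mlie_self (x : Matrix (Fin 3) (Fin 3) K) : ⁅x, x⁆ = 0 := by
  simp [Ring.lie_def]

lemma emb1_lie (a b : L) : emb1 K ⁅a, b⁆ = emb1 K a * emb1 K b - emb1 K b * emb1 K a := by
  simp [emb1, Algebra.TensorProduct.tmul_mul_tmul, Ring.lie_def, sub_tmul]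

lemma emb2_lie (a b : L) : emb2 K ⁅a, b⁆ = emb2 K a * emb2 K b - emb2 K b * emb2 K a := by
  simp [emb2, Algebra.TensorProduct.tmul_mul_tmul, Ring.lie_def, sub_tmul, tmul_sub]

lemma emb3_lie (a b : L) : emb3 K ⁅a, b⁆ = emb3 K a * emb3 K b - emb3 K b * emb3 K a := by
  simp [emb3, Algebra.TensorProduct.tmul_mul_tmul, Ring.lie_def, sub_tmul, tmul_sub]

lemma emb1_zero : emb1 K (0 : L) = 0 := by simp [emb1]
lemma emb2_zero : emb2 K (0 : L) = 0 := by simp [emb2]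
lemma emb3_zero : emb3 K (0 : L) = 0 := by simp [emb3]

lemma emb1_neg (a : L) : emb1 K (-a) = -emb1 K a := by simp [emb1, neg_tmul]
lemma emb2_neg (a : L) : emb2 K (-a) = -emb2 K a := by simp [emb2, neg_tmul, tmul_neg]
lemma emb3_neg (a : L) : emb3 K (-a) = -emb3 K a := by simp [emb3, neg_tmul, tmul_neg]

/-- `x ⊗ y ⊗ z` in normal order. -/
def T (x y z : L) : UEA3 K L := emb1 K x * emb2 K y * emb3 K z

lemma T_zero₁ (y z : L) : T K (0 : L) y z = 0 := by simp [T, emb1_zero]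
lemma T_zero₂ (x z : L) : T K x (0 : L) z = 0 := by simp [T, emb2_zero]
lemma T_zero₃ (x y : L) : T K x y (0 : L) = 0 := by simp [T, emb3_zero]

lemma nmul₁ (x y z : UEA3 K L) : -x * y * z = -(x * y * z) := by
  rw [← zero_sub x, sub_mul, sub_mul, zero_mul, zero_mul, zero_sub]
lemma nmul₂ (x y z : UEA3 K L) : x * -y * z = -(x * y * z) := by
  rw [← zero_sub y, mul_sub, sub_mul, mul_zero, zero_mul, zero_sub]
lemma nmul₃ (x y z : UEA3 K L) : x * y * -z = -(x * y * z) := by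
  rw [← zero_sub z, mul_sub, mul_zero, zero_sub]

lemma T_neg₁ (x y z : L) : T K (-x) y z = -T K x y z := by
  simp only [T, emb1_neg, nmul₁]
lemma T_neg₂ (x y z : L) : T K x (-y) z = -T K x y z := by
  simp only [T, emb2_neg, nmul₂]
lemma T_neg₃ (x y z : L) : T K x y (-z) = -T K x y z := by
  simp only [T, emb3_neg, nmul₃]

lemma k1 (a b c d : L) :
    ⁅emb1 K a * emb2 K b, emb1 K c * emb3 K d⁆ = T K ⁅a, c⁆ b d := by
  simp only [Ring.lie_def, T, emb1_lie, mul_sub, sub_mul, mul_assoc,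
    e21, e31, e32, e21', e31', e32']

lemma k2 (a b c d : L) :
    ⁅emb1 K a * emb2 K b, emb2 K c * emb3 K d⁆ = T K a ⁅b, c⁆ d := by
  simp only [Ring.lie_def, T, emb2_lie, mul_sub, sub_mul, mul_assoc,
    e21, e31, e32, e21', e31', e32']

lemma k3 (a b c d : L) :
    ⁅emb1 K a * emb3 K b, emb2 K c * emb3 K d⁆ = T K a c ⁅b, d⁆ := by
  simp only [Ring.lie_def, T, emb3_lie, mul_sub, sub_mul, mul_assoc,
    e21, e31, e32, e21', e31', e32']

lemma L1213 (a b c d : L) : ⁅w12 K a b, w13 K c d⁆ =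
    T K ⁅a, c⁆ b d - T K ⁅a, d⁆ b c - T K ⁅b, c⁆ a d + T K ⁅b, d⁆ a c := by
  simp only [w12, w13, usub_lie, ulie_sub, k1]
  abel

lemma L1223 (a b c d : L) : ⁅w12 K a b, w23 K c d⁆ =
    T K a ⁅b, c⁆ d - T K a ⁅b, d⁆ c - T K b ⁅a, c⁆ d + T K b ⁅a, d⁆ c := by
  simp only [w12, w23, usub_lie, ulie_sub, k2]
  abel

lemma L1323 (a b c d : L) : ⁅w13 K a b, w23 K c d⁆ =
    T K a c ⁅b, d⁆ - T K a d ⁅b, c⁆ - T K b c ⁅a, d⁆ + T K b d ⁅a, c⁆ := by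
  simp only [w13, w23, usub_lie, ulie_sub, k3]
  abel

-- concrete sl(3) brackets
lemma lHPE : ⁅HPsl3 K, Esl3 K 0 2⁆ = Esl3 K 0 2 := by
  ext i j
  fin_cases i <;> fin_cases j <;>
    simp [HPsl3, Esl3, Ring.lie_def, Matrix.mul_apply, Matrix.single, Fin.sum_univ_succ] <;>
    ring

lemma lHPA : ⁅HPsl3 K, Esl3 K 0 1⁆ = Esl3 K 0 1 := by
  ext i j
  fin_cases i <;> fin_cases j <;>
    simp [HPsl3, Esl3, Ring.lie_def, Matrix.mul_apply, Matrix.single, Fin.sum_univ_succ] <;>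
    ring

lemma lHPB : ⁅HPsl3 K, Esl3 K 1 2⁆ = 0 := by
  ext i j
  fin_cases i <;> fin_cases j <;>
    simp [HPsl3, Esl3, Ring.lie_def, Matrix.mul_apply, Matrix.single, Fin.sum_univ_succ] <;>
    ring

lemma lHPHp : ⁅HPsl3 K, Hperpsl3 K⁆ = 0 := by
  ext i j
  fin_cases i <;> fin_cases j <;>
    simp [HPsl3, Hperpsl3, Esl3, Ring.lie_def, Matrix.mul_apply, Matrix.single,
      Fin.sum_univ_succ] <;> ring

lemma lHpA : ⁅Hperpsl3 K, Esl3 K 0 1⁆ = Esl3 K 0 1 := by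
  ext i j
  fin_cases i <;> fin_cases j <;>
    simp [Hperpsl3, Esl3, Ring.lie_def, Matrix.mul_apply, Matrix.single, Fin.sum_univ_succ] <;>
    ring

lemma lHpE : ⁅Hperpsl3 K, Esl3 K 0 2⁆ = 0 := by
  ext i j
  fin_cases i <;> fin_cases j <;>
    simp [Hperpsl3, Esl3, Ring.lie_def, Matrix.mul_apply, Matrix.single, Fin.sum_univ_succ] <;>
    ring

lemma lHpB : ⁅Hperpsl3 K, Esl3 K 1 2⁆ = -Esl3 K 1 2 := by
  ext i j
  fin_cases i <;> fin_cases j <;>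
    simp [Hperpsl3, Esl3, Ring.lie_def, Matrix.mul_apply, Matrix.single, Fin.sum_univ_succ] <;>
    ring

lemma lAB : ⁅Esl3 K 0 1, Esl3 K 1 2⁆ = Esl3 K 0 2 := by
  ext i j
  fin_cases i <;> fin_cases j <;>
    simp [Esl3, Ring.lie_def, Matrix.mul_apply, Matrix.single, Fin.sum_univ_succ]

lemma lAE : ⁅Esl3 K 0 1, Esl3 K 0 2⁆ = 0 := by
  ext i j
  fin_cases i <;> fin_cases j <;>
    simp [Esl3, Ring.lie_def, Matrix.mul_apply, Matrix.single, Fin.sum_univ_succ]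

lemma lBE : ⁅Esl3 K 1 2, Esl3 K 0 2⁆ = 0 := by
  ext i j
  fin_cases i <;> fin_cases j <;>
    simp [Esl3, Ring.lie_def, Matrix.mul_apply, Matrix.single, Fin.sum_univ_succ]

lemma lEHP : ⁅Esl3 K 0 2, HPsl3 K⁆ = -Esl3 K 0 2 := by rw [← lie_skew, lHPE]
lemma lAHP : ⁅Esl3 K 0 1, HPsl3 K⁆ = -Esl3 K 0 1 := by rw [← lie_skew, lHPA]
lemma lBHP : ⁅Esl3 K 1 2, HPsl3 K⁆ = 0 := by rw [← lie_skew, lHPB, neg_zero]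
lemma lHpHP : ⁅Hperpsl3 K, HPsl3 K⁆ = 0 := by rw [← lie_skew, lHPHp, neg_zero]
lemma lAHp : ⁅Esl3 K 0 1, Hperpsl3 K⁆ = -Esl3 K 0 1 := by rw [← lie_skew, lHpA]
lemma lEHp : ⁅Esl3 K 0 2, Hperpsl3 K⁆ = 0 := by rw [← lie_skew, lHpE, neg_zero]
lemma lBHp : ⁅Esl3 K 1 2, Hperpsl3 K⁆ = Esl3 K 1 2 := by rw [← lie_skew, lHpB, neg_neg]
lemma lBA : ⁅Esl3 K 1 2, Esl3 K 0 1⁆ = -Esl3 K 0 2 := by rw [← lie_skew, lAB]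
lemma lEA : ⁅Esl3 K 0 2, Esl3 K 0 1⁆ = 0 := by rw [← lie_skew, lAE, neg_zero]
lemma lEB : ⁅Esl3 K 0 2, Esl3 K 1 2⁆ = 0 := by rw [← lie_skew, lBE, neg_zero]

end Aux

theorem stmt11 (ξ : K) :
    ⁅rJE K ξ (w12 K), rJE K ξ (w13 K)⁆ + ⁅rJE K ξ (w12 K), rJE K ξ (w23 K)⁆ +
      ⁅rJE K ξ (w13 K), rJE K ξ (w23 K)⁆ = 0 := by
  simp only [rJE, uadd_lie, ulie_add, usmul_lie, ulie_smul, L1213, L1223, L1323,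
    mlie_self, lHPE, lHPA, lHPB, lHPHp, lHpA, lHpE, lHpB, lAB, lAE, lBE,
    lEHP, lAHP, lBHP, lHpHP, lAHp, lEHp, lBHp, lBA, lEA, lEB,
    T_zero₁, T_zero₂, T_zero₃, T_neg₁, T_neg₂, T_neg₃]
  module

end
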